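/- Let C be a code of length n over an alphabet of size q ≥ 2 and let τ be a positive integer such that: (1) τ is even and 2τ ≤ n; (2) there is a decoder for C that detects any single τ-burst error; and (3) there is a (2,τ)-burst list decoder for C. Then the redundancy r = n − log_q |C| of C satisfies r ≥ 2τ − log_q(2q^{τ/2} − 2); equivalently, |C| ≤ q^{n−2τ} · (2q^{τ/2} − 2). In particular, r > (1 + 1/2)·τ − log_q 2. -/

import Mathlib

/-- A word `e ∈ F^n` is a `τ`-burst if its support is contained in `τ`
consecutive positions (equivalently, `e = 0` or the first and last nonzero
indexes `i ≤ j` satisfy `j - i < τ`). -/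
def IsBurst {F : Type*} [Zero F] {n : ℕ} (τ : ℕ) (e : Fin n → F) : Prop :=
  ∃ a : ℕ, ∀ j : Fin n, e j ≠ 0 → a ≤ (j : ℕ) ∧ (j : ℕ) < a + τ

/-- A decoder `D` (returning lists, i.e. finite sets, of codewords) corrects any
single `τ`-burst error. -/
def Corrects {F : Type*} [AddCommGroup F] {n : ℕ}
    (D : (Fin n → F) → Finset (Fin n → F)) (C : Set (Fin n → F)) (τ : ℕ) : Prop :=
  ∀ c ∈ C, ∀ e : Fin n → F, IsBurst τ e → c ∈ D (c + e)

/-- A decoder `D` detects any single `τ`-burst error: on input `c + e` it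
returns `{c}` if `e = 0` and `∅` otherwise. -/
def Detects {F : Type*} [AddCommGroup F] {n : ℕ}
    (D : (Fin n → F) → Finset (Fin n → F)) (C : Set (Fin n → F)) (τ : ℕ) : Prop :=
  ∀ c ∈ C, ∀ e : Fin n → F, IsBurst τ e →
    (e = 0 → D (c + e) = {c}) ∧ (e ≠ 0 → D (c + e) = ∅)

/-- `C` has an `(ℓ,τ)`-burst list decoder: a decoder with lists of codewords of
size at most `ℓ` that corrects any single `τ`-burst error. -/
def HasBurstListDecoder {F : Type*} [AddCommGroup F] {n : ℕ}
    (C : Set (Fin n → F)) (ℓ τ : ℕ) : Prop :=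
  ∃ D : (Fin n → F) → Finset (Fin n → F),
    (∀ y, (D y : Set (Fin n → F)) ⊆ C) ∧ (∀ y, (D y).card ≤ ℓ) ∧ Corrects D C τ

/-- `C` has a decoder detecting any single `τ`-burst error. -/
def HasBurstDetector {F : Type*} [AddCommGroup F] {n : ℕ}
    (C : Set (Fin n → F)) (τ : ℕ) : Prop :=
  ∃ D : (Fin n → F) → Finset (Fin n → F),
    (∀ y, (D y : Set (Fin n → F)) ⊆ C) ∧ Detects D C τ


/-- Reiger-type bound for list size 2, general codes.
If a code `C` of length `n` over an alphabet of size `q ≥ 2`, with `τ` even and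
`2τ ≤ n`, has a decoder detecting any single `τ`-burst error and a
`(2,τ)`-burst list decoder, then `|C| ≤ q^{n-2τ}·(2q^{τ/2} - 2)`, i.e. the
redundancy satisfies `r ≥ 2τ - log_q(2q^{τ/2} - 2) > (1 + 1/2)τ - log_q 2`. -/
theorem Reiger_list_two (F : Type*) [AddCommGroup F] [Fintype F]
    (n τ : ℕ) (hq : 2 ≤ Fintype.card F) (hτ : 1 ≤ τ) (heven : 2 ∣ τ)
    (hn : 2 * τ ≤ n) (C : Set (Fin n → F))
    (h2 : HasBurstDetector C τ)
    (h3 : HasBurstListDecoder C 2 τ) :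
    C.ncard ≤ Fintype.card F ^ (n - 2 * τ) * (2 * Fintype.card F ^ (τ / 2) - 2) := by
  classical
  obtain ⟨s, rfl⟩ := heven
  set q := Fintype.card F with hqdef
  have hs : 1 ≤ s := by omega
  have hn4 : 4 * s ≤ n := by omega
  have hqs : 2 ≤ q ^ s := le_trans hq (Nat.le_self_pow (by omega) q)
  -- detection consequence
  obtain ⟨D2, hD2C, hD2⟩ := h2
  have det : ∀ c ∈ C, ∀ c' ∈ C, IsBurst (2*s) (c' - c) → c = c' := by
    intro c hc c' hc' hb
    by_contra hne
    have he : c' - c ≠ 0 := sub_ne_zero.mpr (Ne.symm hne)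
    have h1 := (hD2 c hc (c' - c) hb).2 he
    have h2' := (hD2 c' hc' 0 ⟨0, fun j hj => absurd rfl hj⟩).1 rfl
    rw [show c + (c' - c) = c' from by abel] at h1
    rw [add_zero] at h2'
    exact Finset.singleton_ne_empty c' (h2'.symm.trans h1)
  -- list-2 consequence
  obtain ⟨D3, hD3C, hD3card, hD3corr⟩ := h3
  have list2 : ∀ y : Fin n → F, ∀ c0 ∈ C, ∀ c1 ∈ C, ∀ c2 ∈ C,
      c0 ≠ c1 → c0 ≠ c2 → c1 ≠ c2 →
      IsBurst (2*s) (y - c0) → IsBurst (2*s) (y - c1) → IsBurst (2*s) (y - c2) →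
      False := by
    intro y c0 h0 c1 h1 c2 hc2 h01 h02 h12 b0 b1 b2
    have m0 : c0 ∈ D3 y := by
      have := hD3corr c0 h0 (y - c0) b0
      rwa [show c0 + (y - c0) = y from by abel] at this
    have m1 : c1 ∈ D3 y := by
      have := hD3corr c1 h1 (y - c1) b1
      rwa [show c1 + (y - c1) = y from by abel] at this
    have m2 : c2 ∈ D3 y := by
      have := hD3corr c2 hc2 (y - c2) b2
      rwa [show c2 + (y - c2) = y from by abel] at this
    have hsub : ({c0, c1, c2} : Finset _) ⊆ D3 y := by
      intro x hx
      simp only [Finset.mem_insert, Finset.mem_singleton] at hx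
      rcases hx with rfl | rfl | rfl <;> assumption
    have hcard3 : ({c0, c1, c2} : Finset _).card = 3 := by
      rw [Finset.card_insert_of_notMem (by simp [h01, h02]),
        Finset.card_insert_of_notMem (by simp [h12]), Finset.card_singleton]
    have hle := Finset.card_le_card hsub
    have := hD3card y
    omega
  -- projections
  set tl : (Fin n → F) → (Fin (n - 4*s) → F) :=
    fun c i => c ⟨4*s + (i : ℕ), by have := i.isLt; omega⟩ with htl
  set p1 : (Fin n → F) → (Fin s → F) :=
    fun c i => c ⟨(i : ℕ), by have := i.isLt; omega⟩ with hp1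
  set p4 : (Fin n → F) → (Fin s → F) :=
    fun c i => c ⟨3*s + (i : ℕ), by have := i.isLt; omega⟩ with hp4
  have tl_eq : ∀ c c' : Fin n → F, tl c = tl c' →
      ∀ j : Fin n, 4*s ≤ (j : ℕ) → c j = c' j := by
    intro c c' h j hj
    have hlt : (j : ℕ) - 4*s < n - 4*s := by have := j.isLt; omega
    have h2 := congrFun h ⟨(j : ℕ) - 4*s, hlt⟩
    simp only [htl] at h2
    have hjj : j = (⟨4*s + ((j : ℕ) - 4*s), by have := j.isLt; omega⟩ : Fin n) := by
      apply Fin.ext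
      show (j : ℕ) = 4*s + ((j : ℕ) - 4*s)
      omega
    rw [hjj]
    exact h2
  have p1_eq : ∀ c c' : Fin n → F, p1 c = p1 c' →
      ∀ j : Fin n, (j : ℕ) < s → c j = c' j := by
    intro c c' h j hj
    have h2 := congrFun h ⟨(j : ℕ), hj⟩
    simp only [hp1] at h2
    have hjj : j = (⟨(j : ℕ), by have := j.isLt; omega⟩ : Fin n) := by
      apply Fin.ext; rfl
    rw [hjj]
    exact h2
  have p4_eq : ∀ c c' : Fin n → F, p4 c = p4 c' →
      ∀ j : Fin n, 3*s ≤ (j : ℕ) → (j : ℕ) < 4*s → c j = c' j := by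
    intro c c' h j hj hj'
    have hlt : (j : ℕ) - 3*s < s := by omega
    have h2 := congrFun h ⟨(j : ℕ) - 3*s, hlt⟩
    simp only [hp4] at h2
    have hjj : j = (⟨3*s + ((j : ℕ) - 3*s), by have := j.isLt; omega⟩ : Fin n) := by
      apply Fin.ext
      show (j : ℕ) = 3*s + ((j : ℕ) - 3*s)
      omega
    rw [hjj]
    exact h2
  set CF := C.toFinset with hCF
  -- fiber bound
  have key : ∀ t ∈ CF.image tl, (CF.filter (fun c => tl c = t)).card ≤ 2 * q ^ s - 2 := by
    intro t _
    set S := CF.filter (fun c => tl c = t) with hS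
    have memC : ∀ c ∈ S, c ∈ C := fun c hc =>
      Set.mem_toFinset.mp (Finset.mem_filter.mp hc).1
    have memt : ∀ c ∈ S, tl c = t := fun c hc => (Finset.mem_filter.mp hc).2
    have inj14 : ∀ c ∈ S, ∀ c' ∈ S, p1 c = p1 c' → p4 c = p4 c' → c = c' := by
      intro c hc c' hc' h1 h4
      apply det c (memC c hc) c' (memC c' hc')
      refine ⟨s, fun j hj => ?_⟩
      have hne : c' j ≠ c j := fun h => hj (by simp [Pi.sub_apply, h])
      constructor
      · by_contra h; push_neg at h
        exact hne (p1_eq c c' h1 j h).symm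
      · by_contra h; push_neg at h
        rcases lt_or_ge (j : ℕ) (4*s) with h4' | h4'
        · exact hne (p4_eq c c' h4 j (by omega) h4').symm
        · exact hne (tl_eq c c' ((memt c hc).trans (memt c' hc').symm) j h4').symm
    have notriple : ∀ d ∈ S, ∀ c ∈ S, ∀ c'' ∈ S, c ≠ d → c'' ≠ d → c ≠ c'' →
        p1 c'' = p1 d → p4 c = p4 d → False := by
      intro d hd c hc c'' hc'' hcd hc''d hcc'' h1 h4
      set y : Fin n → F := fun j => if (j : ℕ) < 2*s then c'' j else c j with hy
      apply list2 y c (memC c hc) c'' (memC c'' hc'') d (memC d hd) hcc'' hcd hc''d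
      · refine ⟨0, fun j hj => ⟨Nat.zero_le _, ?_⟩⟩
        by_contra h; push_neg at h
        apply hj
        simp only [hy, Pi.sub_apply]
        rw [if_neg (by omega)]
        exact sub_self _
      · refine ⟨2*s, fun j hj => ?_⟩
        constructor
        · by_contra h; push_neg at h
          apply hj
          simp only [hy, Pi.sub_apply]
          rw [if_pos h]
          exact sub_self _
        · by_contra h; push_neg at h
          apply hj
          simp only [hy, Pi.sub_apply]
          rw [if_neg (by omega),
            tl_eq c c'' ((memt c hc).trans (memt c'' hc'').symm) j (by omega)]
          exact sub_self _
      · refine ⟨s, fun j hj => ?_⟩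
        constructor
        · by_contra h; push_neg at h
          apply hj
          simp only [hy, Pi.sub_apply]
          rw [if_pos (by omega), p1_eq c'' d h1 j (by omega)]
          exact sub_self _
        · by_contra h; push_neg at h
          apply hj
          simp only [hy, Pi.sub_apply]
          rw [if_neg (by omega)]
          rcases lt_or_ge (j : ℕ) (4*s) with h4' | h4'
          · rw [p4_eq c d h4 j (by omega) h4']
            exact sub_self _
          · rw [tl_eq c d ((memt c hc).trans (memt d hd).symm) j h4']
            exact sub_self _
    set A := S.filter (fun d => ∀ e ∈ S, p1 e = p1 d → e = d) with hA
    set B := S.filter (fun d => ∀ e ∈ S, p4 e = p4 d → e = d) with hB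
    have hSAB : S ⊆ A ∪ B := by
      intro d hd
      rw [Finset.mem_union]
      by_contra h
      push_neg at h
      obtain ⟨hdA, hdB⟩ := h
      rw [hA, Finset.mem_filter] at hdA
      rw [hB, Finset.mem_filter] at hdB
      have h1 : ∃ e ∈ S, p1 e = p1 d ∧ e ≠ d := by
        by_contra hh; push_neg at hh
        exact hdA ⟨hd, hh⟩
      have h4 : ∃ e ∈ S, p4 e = p4 d ∧ e ≠ d := by
        by_contra hh; push_neg at hh
        exact hdB ⟨hd, hh⟩
      obtain ⟨c'', hc''S, hpc'', hnec''⟩ := h1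
      obtain ⟨c, hcS, hpc, hnec⟩ := h4
      have hcc'' : c ≠ c'' := by
        intro hEq
        apply hnec
        apply inj14 c hcS d hd _ hpc
        rw [hEq, hpc'']
      exact notriple d hd c hcS c'' hc''S hnec hnec'' hcc'' hpc'' hpc
    have hcard_univ : (Finset.univ : Finset (Fin s → F)).card = q ^ s := by
      simp [hqdef]
    have cardA : A.card ≤ q ^ s := by
      have h := Finset.card_le_card_of_injOn (s := A) (t := Finset.univ) p1
        (fun a _ => Finset.mem_univ (p1 a)) ?_
      · rwa [hcard_univ] at h
      · intro a ha b hb hab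
        have ha' := Finset.mem_filter.mp ha
        exact (ha'.2 b (Finset.mem_filter.mp hb).1 hab.symm).symm
    have cardB : B.card ≤ q ^ s := by
      have h := Finset.card_le_card_of_injOn (s := B) (t := Finset.univ) p4
        (fun a _ => Finset.mem_univ (p4 a)) ?_
      · rwa [hcard_univ] at h
      · intro a ha b hb hab
        have ha' := Finset.mem_filter.mp ha
        exact (ha'.2 b (Finset.mem_filter.mp hb).1 hab.symm).symm
    by_cases hSA : S ⊆ A
    · have := Finset.card_le_card hSA
      omega
    by_cases hSB : S ⊆ B
    · have := Finset.card_le_card hSB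
      omega
    obtain ⟨d0, hd0S, hd0A⟩ := Finset.not_subset.mp hSA
    obtain ⟨d1, hd1S, hd1B⟩ := Finset.not_subset.mp hSB
    have cardA' : A.card ≤ q ^ s - 1 := by
      have h := Finset.card_le_card_of_injOn (s := A)
        (t := Finset.univ.erase (p1 d0)) p1 ?_ ?_
      · rwa [Finset.card_erase_of_mem (Finset.mem_univ _), hcard_univ] at h
      · intro a ha
        rw [Finset.mem_coe] at ha ⊢; rw [Finset.mem_erase]
        refine ⟨?_, Finset.mem_univ _⟩
        intro hEq
        apply hd0A
        have ha' := Finset.mem_filter.mp ha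
        have : d0 = a := ha'.2 d0 hd0S hEq.symm
        rwa [← this] at ha
      · intro a ha b hb hab
        have ha' := Finset.mem_filter.mp ha
        exact (ha'.2 b (Finset.mem_filter.mp hb).1 hab.symm).symm
    have cardB' : B.card ≤ q ^ s - 1 := by
      have h := Finset.card_le_card_of_injOn (s := B)
        (t := Finset.univ.erase (p4 d1)) p4 ?_ ?_
      · rwa [Finset.card_erase_of_mem (Finset.mem_univ _), hcard_univ] at h
      · intro a ha
        rw [Finset.mem_coe] at ha ⊢; rw [Finset.mem_erase]
        refine ⟨?_, Finset.mem_univ _⟩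
        intro hEq
        apply hd1B
        have ha' := Finset.mem_filter.mp ha
        have : d1 = a := ha'.2 d1 hd1S hEq.symm
        rwa [← this] at ha
      · intro a ha b hb hab
        have ha' := Finset.mem_filter.mp ha
        exact (ha'.2 b (Finset.mem_filter.mp hb).1 hab.symm).symm
    have h1 := Finset.card_le_card hSAB
    have h2 := Finset.card_union_le A B
    omega
  have main := Finset.card_le_mul_card_image (f := tl) CF (2 * q ^ s - 2) key
  have himg : (CF.image tl).card ≤ q ^ (n - 4*s) := by
    calc (CF.image tl).card ≤ Fintype.card (Fin (n - 4*s) → F) := Finset.card_le_univ _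
      _ = q ^ (n - 4*s) := by simp [hqdef]
  have hncard : C.ncard = CF.card := Set.ncard_eq_toFinset_card' C
  have hdiv : 2 * s / 2 = s := by omega
  have hsub4 : n - 2 * (2 * s) = n - 4 * s := by omega
  rw [hncard, hsub4, hdiv, mul_comm]
  calc CF.card ≤ (2 * q ^ s - 2) * (CF.image tl).card := main
    _ ≤ (2 * q ^ s - 2) * q ^ (n - 4*s) := Nat.mul_le_mul_left _ himg
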